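/- Let g : X_i^* → X_2^* be a Gödel numbering and let f : ℕ → ℕ be a function for which there is a real a > 0 with f(n) ≥ a·n for all n ≥ 1. Then there exists a constant M such that H_2(g(x)) ≤ M·f(|x|_i) for every nonempty x ∈ X_i^*; consequently, for every N ≥ M and every n ≥ 1 the set {x ∈ X_i^* : |x|_i = n and H_2(g(x)) ≤ N·f(n)} is all of X_i^n, so lim_{n→∞} i^{−n}·card{x ∈ X_i^* : |x|_i = n and H_2(g(x)) ≤ N·f(n)} = 1 ≠ 0. -/

import Mathlib

open scoped ENNReal

/-- Finite strings over an alphabet with `i` letters. -/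
abbrev Str (i : ℕ) : Type := List (Fin i)

/-- A set of strings is prefix-free: no element is a proper prefix of another. -/
def PrefixFree {i : ℕ} (S : Set (Str i)) : Prop :=
  ∀ x ∈ S, ∀ y ∈ S, x <+: y → x = y

/-- A self-delimiting machine over the alphabet with `i` letters: a partial computable
function on strings whose domain is prefix-free. -/
structure Machine (i : ℕ) where
  f : Str i →. Str i
  partrec : Partrec f
  prefixFree : PrefixFree f.Dom

/-- Program-size complexity of `x` relative to the machine `T`:
the least length of a program `y` with `T(y) = x` (with `min ∅ = ∞`). -/
noncomputable def Hc {i : ℕ} (T : Machine i) (x : Str i) : ℝ≥0∞ :=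
  sInf {n : ℝ≥0∞ | ∃ y : Str i, (y.length : ℝ≥0∞) = n ∧ x ∈ T.f y}

/-- `U` is a universal machine: it minimizes program-size complexity up to an
additive constant among all machines. -/
def IsUniversal {i : ℕ} (U : Machine i) : Prop :=
  ∀ T : Machine i, ∃ c : ℕ, ∀ x : Str i, Hc U x ≤ Hc T x + (c : ℝ≥0∞)

/-- A set of strings is computably enumerable if it is the domain of a
partial computable function. -/
def CEset {i : ℕ} (A : Set (Str i)) : Prop :=
  ∃ f : Str i →. Str i, Partrec f ∧ A = f.Dom

/-- A Gödel numbering for `L`: a computable function into binary strings,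
injective on `L`. -/
def GoedelNumbering {i : ℕ} (L : Set (Str i)) (g : Str i → Str 2) : Prop :=
  Computable g ∧ Set.InjOn g L

namespace St16

def b0 : Fin 2 := 0
def b1 : Fin 2 := 1

def dbl : List (Fin 2) → List (Fin 2) := fun w => w.flatMap fun b => [b, b]

@[simp] lemma dbl_nil : dbl [] = [] := rfl
@[simp] lemma dbl_cons (b : Fin 2) (w : List (Fin 2)) : dbl (b :: w) = b :: b :: dbl w := rfl

@[simp] lemma dbl_length (w : List (Fin 2)) : (dbl w).length = 2 * w.length := by
  induction w with
  | nil => simp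
  | cons b w ih => simp [ih]; omega

lemma prefix_dbl {u v : List (Fin 2)} (h : dbl u ++ [b0, b1] <+: dbl v ++ [b0, b1]) :
    u = v := by
  induction u generalizing v with
  | nil =>
    cases v with
    | nil => rfl
    | cons b v' =>
      simp only [dbl_nil, List.nil_append, dbl_cons, List.cons_append,
        List.cons_prefix_cons] at h
      obtain ⟨h1, h2, _⟩ := h
      exact absurd (h1.trans h2.symm) (by decide)
  | cons a u' ih =>
    cases v with
    | nil =>
      simp only [dbl_cons, dbl_nil, List.nil_append, List.cons_append,
        List.cons_prefix_cons] at h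
      obtain ⟨h1, h2, h3⟩ := h
      have := h3.length_le
      simp at this
    | cons b v' =>
      simp only [dbl_cons, List.cons_append, List.cons_prefix_cons] at h
      obtain ⟨h1, _, h3⟩ := h
      rw [h1, ih h3]

variable {i : ℕ}

def blk (i : ℕ) (a : Fin i) : List (Fin 2) :=
  List.replicate a.val b1 ++ List.replicate (i - a.val) b0

@[simp] lemma blk_length (a : Fin i) : (blk i a).length = i := by
  have := a.isLt; simp [blk]

lemma blk_count (a : Fin i) : (blk i a).count b1 = a.val := by
  simp [blk, List.count_replicate, b0, b1]

lemma blk_inj {a b : Fin i} (h : blk i a = blk i b) : a = b := by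
  have := blk_count a
  rw [h, blk_count] at this
  exact Fin.ext this.symm

def bits (i : ℕ) (x : List (Fin i)) : List (Fin 2) := x.flatMap (blk i)

@[simp] lemma bits_nil : bits i [] = [] := rfl
@[simp] lemma bits_cons (a : Fin i) (x : List (Fin i)) :
    bits i (a :: x) = blk i a ++ bits i x := rfl

@[simp] lemma bits_length (x : List (Fin i)) : (bits i x).length = i * x.length := by
  induction x with
  | nil => simp
  | cons a x ih => simp [ih]; ring

lemma bits_inj (hi : 1 ≤ i) {x y : List (Fin i)} (h : bits i x = bits i y) : x = y := by
  induction x generalizing y with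
  | nil =>
    cases y with
    | nil => rfl
    | cons b y' =>
      have := congrArg List.length h
      simp at this; omega
  | cons a x' ih =>
    cases y with
    | nil =>
      have := congrArg List.length h
      simp at this; omega
    | cons b y' =>
      simp only [bits_cons] at h
      obtain ⟨h1, h2⟩ := List.append_inj h (by simp)
      rw [blk_inj h1, ih h2]

def code (i : ℕ) (x : List (Fin i)) : List (Fin 2) := dbl (bits i x) ++ [b0, b1]

lemma code_length (x : List (Fin i)) : (code i x).length = 2 * (i * x.length) + 2 := by
  simp [code]

lemma code_prefix {x y : List (Fin i)} (hi : 1 ≤ i) (h : code i x <+: code i y) : x = y :=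
  bits_inj hi (prefix_dbl h)

lemma code_inj (hi : 1 ≤ i) {x y : List (Fin i)} (h : code i x = code i y) : x = y :=
  code_prefix hi (h ▸ List.prefix_refl _)

-- computability
lemma primrec_replicate (c : Fin 2) : Primrec fun n : ℕ => List.replicate n c := by
  have : Primrec fun n : ℕ => (List.range n).map (fun _ => c) :=
    Primrec.list_map Primrec.list_range (Primrec.const c).to₂
  exact this.of_eq fun n => by simp [List.map_const']

lemma primrec_blk : Primrec (blk i) :=
  Primrec.list_append.comp ((primrec_replicate b1).comp Primrec.fin_val)
    ((primrec_replicate b0).comp (Primrec.nat_sub.comp (Primrec.const i) Primrec.fin_val))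

lemma primrec_bits : Primrec (bits i) :=
  Primrec.list_flatMap Primrec.id (primrec_blk.comp Primrec.snd).to₂

lemma primrec_dbl : Primrec dbl :=
  Primrec.list_flatMap Primrec.id
    ((Primrec.list_cons.comp Primrec.snd
      (Primrec.list_cons.comp Primrec.snd (Primrec.const []))).to₂)

lemma primrec_code : Primrec (code i) :=
  Primrec.list_append.comp (primrec_dbl.comp primrec_bits) (Primrec.const [b0, b1])

def D (i : ℕ) (p : List (Fin 2)) (n : ℕ) : Option (List (Fin i)) :=
  (Encodable.decode₂ (List (Fin i)) n).bind fun x => if code i x = p then some x else none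

lemma primrec_D : Primrec₂ (D i) := by
  unfold D
  exact Primrec.option_bind (Primrec.decode₂.comp Primrec.snd)
    ((Primrec.ite (Primrec.eq.comp (primrec_code.comp Primrec.snd)
        (Primrec.fst.comp Primrec.fst))
      (Primrec.option_some.comp Primrec.snd) (Primrec.const none)).to₂)

lemma D_eq_some {p : List (Fin 2)} {n : ℕ} {x : List (Fin i)} :
    D i p n = some x ↔ Encodable.encode x = n ∧ code i x = p := by
  simp only [D, Option.bind_eq_some_iff]
  constructor
  · rintro ⟨y, hy, hif⟩
    by_cases hc : code i y = p
    · simp [hc] at hif; subst hif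
      exact ⟨Encodable.decode₂_eq_some.1 hy, hc⟩
    · simp [hc] at hif
  · rintro ⟨h1, h2⟩
    exact ⟨x, Encodable.decode₂_eq_some.2 h1, by simp [h2]⟩

lemma mem_rfindOpt_of_unique {α : Type*} {f : ℕ → Option α} {n : ℕ} {a : α}
    (h : f n = some a) (hu : ∀ m b, f m = some b → b = a) : a ∈ Nat.rfindOpt f := by
  have hdom : (Nat.rfindOpt f).Dom := Nat.rfindOpt_dom.2 ⟨n, a, h⟩
  obtain ⟨b, hb⟩ := Part.dom_iff_mem.1 hdom
  obtain ⟨m, hm⟩ := Nat.rfindOpt_spec hb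
  rwa [hu m b hm] at hb

end St16

namespace St16

variable {i : ℕ}

def Fm (g : List (Fin i) → List (Fin 2)) (p : List (Fin 2)) (n : ℕ) :
    Option (List (Fin 2)) := (D i p n).map g

lemma Fm_eq_some {g : List (Fin i) → List (Fin 2)} {p : List (Fin 2)} {n : ℕ}
    {b : List (Fin 2)} :
    Fm g p n = some b ↔ ∃ x, Encodable.encode x = n ∧ code i x = p ∧ g x = b := by
  simp only [Fm, Option.map_eq_some_iff]
  constructor
  · rintro ⟨x, hx, rfl⟩
    exact ⟨x, (D_eq_some.1 hx).1, (D_eq_some.1 hx).2, rfl⟩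
  · rintro ⟨x, h1, h2, rfl⟩
    exact ⟨x, D_eq_some.2 ⟨h1, h2⟩, rfl⟩

def Tf (g : List (Fin i) → List (Fin 2)) : List (Fin 2) →. List (Fin 2) :=
  fun p => Nat.rfindOpt (Fm g p)

lemma partrec_Tf {g : List (Fin i) → List (Fin 2)} (hg : Computable g) :
    Partrec (Tf g) := by
  have hF : Computable₂ (Fm (i := i) g) :=
    Computable.option_map (primrec_D.to_comp) ((hg.comp Computable.snd).to₂)
  exact Partrec.rfindOpt hF

lemma Tf_dom {g : List (Fin i) → List (Fin 2)} {p : List (Fin 2)}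
    (h : (Tf g p).Dom) : ∃ x, code i x = p := by
  obtain ⟨n, b, hb⟩ := Nat.rfindOpt_dom.1 h
  obtain ⟨x, -, h2, -⟩ := Fm_eq_some.1 hb
  exact ⟨x, h2⟩

lemma Tf_code (hi : 1 ≤ i) {g : List (Fin i) → List (Fin 2)} (x : List (Fin i)) :
    g x ∈ Tf g (code i x) := by
  apply mem_rfindOpt_of_unique (n := Encodable.encode x)
  · exact Fm_eq_some.2 ⟨x, rfl, rfl, rfl⟩
  · intro m b hb
    obtain ⟨x', -, h2, rfl⟩ := Fm_eq_some.1 hb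
    rw [code_inj hi h2]

def Tm (hi : 1 ≤ i) (g : List (Fin i) → List (Fin 2)) (hg : Computable g) :
    Machine 2 where
  f := Tf g
  partrec := partrec_Tf hg
  prefixFree := by
    intro p1 h1 p2 h2 hpre
    obtain ⟨x1, rfl⟩ := Tf_dom h1
    obtain ⟨x2, rfl⟩ := Tf_dom h2
    rw [code_prefix hi hpre]

lemma Hc_Tm_le (hi : 1 ≤ i) (g : List (Fin i) → List (Fin 2)) (hg : Computable g)
    (x : List (Fin i)) :
    Hc (Tm hi g hg) (g x) ≤ (((code i x).length : ℕ) : ℝ≥0∞) :=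
  sInf_le ⟨code i x, rfl, Tf_code hi x⟩

end St16

/-- If `f : ℕ → ℕ` grows at least linearly (`f(n) ≥ a·n` for some real `a > 0`), then
for a Gödel numbering `g` there is `M` with `H₂(g(x)) ≤ M·f(|x|ᵢ)` for all nonempty
`x`; consequently for every `N ≥ M` and `n ≥ 1` the set
`{x : |x|ᵢ = n, H₂(g(x)) ≤ N·f(n)}` is all of `Xᵢⁿ`, and the corresponding densities
tend to `1`. -/
theorem stmt_16 {i : ℕ} (hi : 2 ≤ i) (Ui : Machine i) (hUi : IsUniversal Ui)
    (U2 : Machine 2) (hU2 : IsUniversal U2)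
    (g : Str i → Str 2) (hg : GoedelNumbering Set.univ g)
    (f : ℕ → ℕ) (a : ℝ) (ha : 0 < a) (hf : ∀ n : ℕ, 1 ≤ n → a * (n : ℝ) ≤ (f n : ℝ)) :
    ∃ M : ℕ,
      (∀ x : Str i, x ≠ [] → Hc U2 (g x) ≤ ((M * f x.length : ℕ) : ℝ≥0∞)) ∧
      ∀ N : ℕ, M ≤ N →
        (∀ n : ℕ, 1 ≤ n →
          {x : Str i | x.length = n ∧ Hc U2 (g x) ≤ ((N * f n : ℕ) : ℝ≥0∞)} =
            {x : Str i | x.length = n}) ∧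
        Filter.Tendsto
          (fun n : ℕ =>
            (Set.ncard {x : Str i | x.length = n ∧ Hc U2 (g x) ≤ ((N * f n : ℕ) : ℝ≥0∞)} : ℝ)
              / (i : ℝ) ^ n)
          Filter.atTop (nhds 1) := by
  classical
  obtain ⟨hgc, -⟩ := hg
  have hi1 : 1 ≤ i := le_trans (by norm_num) hi
  set T : Machine 2 := St16.Tm hi1 g hgc with hT
  obtain ⟨c, hc⟩ := hU2 T
  set K : ℕ := ⌈1 / a⌉₊ with hK
  set M : ℕ := (2 * i + 2 + c) * K with hMdef
  have key : ∀ n : ℕ, 1 ≤ n → 2 * (i * n) + 2 + c ≤ M * f n := by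
    intro n hn
    have hfa := hf n hn
    have hfn : 1 ≤ f n := by
      rcases Nat.eq_zero_or_pos (f n) with h0 | h; swap
      · exact h
      rw [h0] at hfa
      have : (0 : ℝ) < a * n := by positivity
      simp at hfa; nlinarith
    have hnK : n ≤ K * f n := by
      have h1 : (1 : ℝ) / a ≤ (K : ℝ) := Nat.le_ceil _
      have h2 : (n : ℝ) ≤ (f n : ℝ) * (1 / a) := by
        rw [mul_one_div, le_div_iff₀ ha]
        nlinarith
      have h3 : (n : ℝ) ≤ (K : ℝ) * (f n : ℝ) := by
        have : (f n : ℝ) * (1 / a) ≤ (f n : ℝ) * (K : ℝ) :=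
          mul_le_mul_of_nonneg_left h1 (by positivity)
        nlinarith
      exact_mod_cast h3
    calc 2 * (i * n) + 2 + c ≤ (2 * i + 2 + c) * n := by nlinarith
      _ ≤ (2 * i + 2 + c) * (K * f n) := Nat.mul_le_mul_left _ hnK
      _ = M * f n := by rw [hMdef]; ring
  have hM : ∀ x : Str i, x ≠ [] → Hc U2 (g x) ≤ ((M * f x.length : ℕ) : ℝ≥0∞) := by
    intro x hx
    have hn : 1 ≤ x.length := List.length_pos_iff.2 hx
    calc Hc U2 (g x) ≤ Hc T (g x) + (c : ℝ≥0∞) := hc _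
      _ ≤ (((St16.code i x).length : ℕ) : ℝ≥0∞) + (c : ℝ≥0∞) :=
          add_le_add_left (St16.Hc_Tm_le hi1 g hgc x) _
      _ = ((2 * (i * x.length) + 2 + c : ℕ) : ℝ≥0∞) := by
          rw [St16.code_length]; push_cast; ring
      _ ≤ ((M * f x.length : ℕ) : ℝ≥0∞) := Nat.cast_le.2 (key _ hn)
  have hcard : ∀ n : ℕ, Set.ncard {x : Str i | x.length = n} = i ^ n := by
    intro n
    have e : {x : Str i | x.length = n} ≃ List.Vector (Fin i) n :=
      Equiv.subtypeEquivRight fun _ => Iff.rfl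
    rw [← Nat.card_coe_set_eq, Nat.card_congr e, Nat.card_eq_fintype_card,
      card_vector, Fintype.card_fin]
  refine ⟨M, hM, fun N hN => ?_⟩
  have hset : ∀ n : ℕ, 1 ≤ n →
      {x : Str i | x.length = n ∧ Hc U2 (g x) ≤ ((N * f n : ℕ) : ℝ≥0∞)} =
        {x : Str i | x.length = n} := by
    intro n hn
    ext x
    simp only [Set.mem_setOf_eq, and_iff_left_iff_imp]
    intro hxn
    have hne : x ≠ [] := by
      intro h; rw [h] at hxn; simp at hxn; omega
    calc Hc U2 (g x) ≤ ((M * f x.length : ℕ) : ℝ≥0∞) := hM x hne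
      _ ≤ ((N * f n : ℕ) : ℝ≥0∞) := by
          rw [hxn]; exact Nat.cast_le.2 (Nat.mul_le_mul_right _ hN)
  refine ⟨hset, ?_⟩
  refine Filter.Tendsto.congr' ?_ tendsto_const_nhds
  filter_upwards [Filter.eventually_ge_atTop 1] with n hn
  rw [hset n hn, hcard n]
  have hipos : (i : ℝ) ^ n ≠ 0 :=
    pow_ne_zero _ (Nat.cast_ne_zero.2 (by omega))
  push_cast
  rw [div_self hipos]
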